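/- Let c < d be real numbers and for each i ∈ ℕ let T_i ⊂ ℝ×(c,d] be a half open trapezoid with upper base at level d_i ∈ (c,d], such that T_i ∩ T_j = ∅ for i ≠ j and lim_{i→∞} d_i = c. Then there exists a homeomorphism η : ℝ×(c,d] → ℝ×(c,d] such that: (i) η(ℝ×{y}) = ℝ×{y} for all y ∈ (c,d]; (ii) for each i ∈ ℕ, η(T_i) is a half open rectangle, i.e. a set of the form [a_i, b_i]×(c, d_i] with a_i < b_i. -/

import Mathlib

open Set

noncomputable section
namespace Stmt18

/-- Continuous ramp: `0` for `x ≤ l`, `1` for `x ≥ r`, affine in between. -/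
def ramp (l r x : ℝ) : ℝ := min (max ((x - l) / (r - l)) 0) 1

lemma ramp_of_le {l r x : ℝ} (hlr : l < r) (h : x ≤ l) : ramp l r x = 0 := by
  have hd : (x - l) / (r - l) ≤ 0 := div_nonpos_of_nonpos_of_nonneg (by linarith) (by linarith)
  simp only [ramp]
  rw [max_eq_right hd, min_eq_left zero_le_one]

lemma ramp_of_ge {l r x : ℝ} (hlr : l < r) (h : r ≤ x) : ramp l r x = 1 := by
  have h1 : (1 : ℝ) ≤ (x - l) / (r - l) := by
    rw [le_div_iff₀ (by linarith)]; linarith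
  simp only [ramp]
  rw [max_eq_left (by linarith), min_eq_right h1]

lemma ramp_of_mem {l r x : ℝ} (hlr : l < r) (h1 : l ≤ x) (h2 : x ≤ r) :
    ramp l r x = (x - l) / (r - l) := by
  have hpos : (0:ℝ) < r - l := by linarith
  have h0 : (0:ℝ) ≤ (x - l) / (r - l) := div_nonneg (by linarith) hpos.le
  have h1' : (x - l) / (r - l) ≤ 1 := by rw [div_le_one hpos]; linarith
  simp only [ramp]
  rw [max_eq_left h0, min_eq_left h1']

lemma ramp_contOn {γ : Type*} [TopologicalSpace γ] {L R X : γ → ℝ} {s : Set γ}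
    (hL : ContinuousOn L s) (hR : ContinuousOn R s) (hX : ContinuousOn X s)
    (h : ∀ z ∈ s, L z < R z) :
    ContinuousOn (fun z => ramp (L z) (R z) (X z)) s := by
  have h1 : ContinuousOn (fun z => (X z - L z) / (R z - L z)) s :=
    (hX.sub hL).div (hR.sub hL) (fun z hz => sub_ne_zero.mpr (h z hz).ne')
  have h2 : ContinuousOn (fun z => max ((X z - L z) / (R z - L z)) 0) s :=
    h1.sup continuousOn_const
  exact h2.inf continuousOn_const


/-! ### The piecewise linear building block -/

def lterm : Option ℝ → ℝ → ℝ → ℝ → ℝ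
  | none, p, a, _ => a - p
  | some u, p, a, x => (a - p) * ramp u p x

def rterm : Option ℝ → ℝ → ℝ → ℝ → ℝ
  | none, _, _, _ => 0
  | some v, q, b, x => -(b - q) * ramp q v x

/-- Monotone piecewise linear map sending `[p,q]` affinely onto `[a,b]`, equal to the
identity to the left of `u` (if `uo = some u`) and to the right of `v` (if `vo = some v`);
if `uo = none` it is a translation on `(-∞,p]`, similarly on the right. -/
def pl (uo vo : Option ℝ) (p q a b x : ℝ) : ℝ :=
  x + lterm uo p a x + ((b - q) - (a - p)) * ramp p q x + rterm vo q b x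

structure PLH (uo vo : Option ℝ) (p q a b : ℝ) : Prop where
  hpq : p < q
  hab : a < b
  hu : ∀ u ∈ uo, u < p ∧ u < a
  hv : ∀ v ∈ vo, q < v ∧ b < v

lemma PLH.symm {uo vo : Option ℝ} {p q a b : ℝ} (h : PLH uo vo p q a b) :
    PLH uo vo a b p q :=
  ⟨h.hab, h.hpq, fun u hu => (h.hu u hu).symm, fun v hv => (h.hv v hv).symm⟩

variable {uo vo : Option ℝ} {p q a b u v x : ℝ}

lemma rterm_of_le (h : ∀ v ∈ vo, q < v) (hx : x ≤ q) : rterm vo q b x = 0 := by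
  cases vo with
  | none => rfl
  | some v => simp [rterm, ramp_of_le (h v rfl) hx]

lemma lterm_of_ge (h : ∀ u ∈ uo, u < p) (hx : p ≤ x) : lterm uo p a x = a - p := by
  cases uo with
  | none => rfl
  | some u => simp [lterm, ramp_of_ge (h u rfl) hx]

lemma pl_eval₁ (h : PLH (some u) vo p q a b) (hx : x ≤ u) : pl (some u) vo p q a b x = x := by
  have hup := (h.hu u rfl).1
  have h1 : x ≤ p := hx.trans hup.le
  rw [pl, lterm, ramp_of_le hup hx, ramp_of_le h.hpq h1,
    rterm_of_le (fun v hv => (h.hv v hv).1) (h1.trans h.hpq.le)]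
  ring

lemma pl_eval₂ (h : PLH (some u) vo p q a b) (h1 : u ≤ x) (h2 : x ≤ p) :
    pl (some u) vo p q a b x = x + (a - p) * ((x - u) / (p - u)) := by
  have hup := (h.hu u rfl).1
  rw [pl, lterm, ramp_of_mem hup h1 h2, ramp_of_le h.hpq h2,
    rterm_of_le (fun v hv => (h.hv v hv).1) (h2.trans h.hpq.le)]
  ring

lemma pl_eval₂' (h : PLH none vo p q a b) (h2 : x ≤ p) :
    pl none vo p q a b x = x + (a - p) := by
  rw [pl, lterm, ramp_of_le h.hpq h2,
    rterm_of_le (fun v hv => (h.hv v hv).1) (h2.trans h.hpq.le)]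
  ring

lemma pl_eval₃ (h : PLH uo vo p q a b) (h1 : p ≤ x) (h2 : x ≤ q) :
    pl uo vo p q a b x = x + (a - p) + ((b - q) - (a - p)) * ((x - p) / (q - p)) := by
  rw [pl, lterm_of_ge (fun u hu => (h.hu u hu).1) h1, ramp_of_mem h.hpq h1 h2,
    rterm_of_le (fun v hv => (h.hv v hv).1) h2]
  ring

lemma pl_eval₄ (h : PLH uo (some v) p q a b) (h1 : q ≤ x) (h2 : x ≤ v) :
    pl uo (some v) p q a b x = x + (b - q) - (b - q) * ((x - q) / (v - q)) := by
  have hqv := (h.hv v rfl).1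
  rw [pl, lterm_of_ge (fun u hu => (h.hu u hu).1) (h.hpq.le.trans h1),
    ramp_of_ge h.hpq h1, rterm, ramp_of_mem hqv h1 h2]
  ring

lemma pl_eval₄' (h : PLH uo none p q a b) (h1 : q ≤ x) :
    pl uo none p q a b x = x + (b - q) := by
  rw [pl, lterm_of_ge (fun u hu => (h.hu u hu).1) (h.hpq.le.trans h1),
    ramp_of_ge h.hpq h1, rterm]
  ring

lemma pl_eval₅ (h : PLH uo (some v) p q a b) (hx : v ≤ x) : pl uo (some v) p q a b x = x := by
  have hqv := (h.hv v rfl).1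
  have h1 : q ≤ x := hqv.le.trans hx
  rw [pl, lterm_of_ge (fun u hu => (h.hu u hu).1) (h.hpq.le.trans h1),
    ramp_of_ge h.hpq h1, rterm, ramp_of_ge hqv hx]
  ring

lemma pl_p (h : PLH uo vo p q a b) : pl uo vo p q a b p = a := by
  rw [pl_eval₃ h le_rfl h.hpq.le]
  field_simp
  ring

lemma pl_q (h : PLH uo vo p q a b) : pl uo vo p q a b q = b := by
  rw [pl_eval₃ h h.hpq.le le_rfl]
  have : q - p ≠ 0 := by have := h.hpq; intro hc; apply absurd this; simp; linarith
  field_simp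
  ring

lemma pl_id : pl uo vo p q p q x = x := by
  cases uo <;> cases vo <;> simp [pl, lterm, rterm] <;> ring


lemma pl_strictMono (h : PLH uo vo p q a b) : StrictMono (pl uo vo p q a b) := by
  have hpq := h.hpq; have hab := h.hab
  have hne1 : q - p ≠ 0 := by have := h.hpq; intro hc; linarith [sub_eq_zero.mp hc]
  have hne2 : b - a ≠ 0 := by have := h.hab; intro hc; linarith [sub_eq_zero.mp hc]
  have hmid : StrictMonoOn (pl uo vo p q a b) (Icc p q) := by
    intro x hx y hy hxy
    rw [pl_eval₃ h hx.1 hx.2, pl_eval₃ h hy.1 hy.2, ← sub_pos]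
    have key : y + (a - p) + ((b - q) - (a - p)) * ((y - p) / (q - p)) -
        (x + (a - p) + ((b - q) - (a - p)) * ((x - p) / (q - p))) =
        (y - x) * (b - a) / (q - p) := by
      field_simp
      ring
    rw [key]
    have h1 : 0 < y - x := by linarith
    have h2 : 0 < b - a := by linarith
    have h3 : 0 < q - p := by linarith
    positivity
  have hleft : StrictMonoOn (pl uo vo p q a b) (Iic p) := by
    cases uo with
    | none =>
      intro x hx y hy hxy
      rw [pl_eval₂' h hx, pl_eval₂' h hy]
      linarith
    | some u =>
      have hup := (h.hu u rfl).1
      have hua := (h.hu u rfl).2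
      have hneu : p - u ≠ 0 := by intro hc; linarith [sub_eq_zero.mp hc]
      have s1 : StrictMonoOn (pl (some u) vo p q a b) (Iic u) := by
        intro x hx y hy hxy
        rw [pl_eval₁ h hx, pl_eval₁ h hy]; exact hxy
      have s2 : StrictMonoOn (pl (some u) vo p q a b) (Icc u p) := by
        intro x hx y hy hxy
        rw [pl_eval₂ h hx.1 hx.2, pl_eval₂ h hy.1 hy.2, ← sub_pos]
        have key : y + (a - p) * ((y - u) / (p - u)) - (x + (a - p) * ((x - u) / (p - u))) =
            (y - x) * (a - u) / (p - u) := by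
          field_simp; ring
        rw [key]
        have h1 : 0 < y - x := by linarith
        have h2 : 0 < a - u := by linarith
        have h3 : 0 < p - u := by linarith
        positivity
      have := s1.union s2 isGreatest_Iic ⟨left_mem_Icc.2 hup.le, fun z hz => hz.1⟩
      rwa [Iic_union_Icc_eq_Iic hup.le] at this
  have hright : StrictMonoOn (pl uo vo p q a b) (Ici q) := by
    cases vo with
    | none =>
      intro x hx y hy hxy
      rw [pl_eval₄' h hx, pl_eval₄' h hy]
      linarith
    | some v =>
      have hqv := (h.hv v rfl).1
      have hbv := (h.hv v rfl).2
      have hnev : v - q ≠ 0 := by intro hc; linarith [sub_eq_zero.mp hc]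
      have s1 : StrictMonoOn (pl uo (some v) p q a b) (Icc q v) := by
        intro x hx y hy hxy
        rw [pl_eval₄ h hx.1 hx.2, pl_eval₄ h hy.1 hy.2, ← sub_pos]
        have key : y + (b - q) - (b - q) * ((y - q) / (v - q)) -
            (x + (b - q) - (b - q) * ((x - q) / (v - q))) = (y - x) * (v - b) / (v - q) := by
          field_simp; ring
        rw [key]
        have h1 : 0 < y - x := by linarith
        have h2 : 0 < v - b := by linarith
        have h3 : 0 < v - q := by linarith
        positivity
      have s2 : StrictMonoOn (pl uo (some v) p q a b) (Ici v) := by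
        intro x hx y hy hxy
        rw [pl_eval₅ h hx, pl_eval₅ h hy]; exact hxy
      have := s1.union s2 ⟨right_mem_Icc.2 hqv.le, fun z hz => hz.2⟩ isLeast_Ici
      rwa [Icc_union_Ici_eq_Ici hqv.le] at this
  have hIq : StrictMonoOn (pl uo vo p q a b) (Iic q) := by
    have := hleft.union hmid isGreatest_Iic ⟨left_mem_Icc.2 hpq.le, fun z hz => hz.1⟩
    rwa [Iic_union_Icc_eq_Iic hpq.le] at this
  exact hIq.Iic_union_Ici hright

lemma pl_inv (h : PLH uo vo p q a b) (x : ℝ) :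
    pl uo vo a b p q (pl uo vo p q a b x) = x := by
  have h' := h.symm
  have hpq := h.hpq; have hab := h.hab
  have hne1 : q - p ≠ 0 := by intro hc; linarith [sub_eq_zero.mp hc]
  have hne2 : b - a ≠ 0 := by intro hc; linarith [sub_eq_zero.mp hc]
  rcases le_total x p with hxp | hpx
  · cases uo with
    | none =>
      rw [pl_eval₂' h hxp, pl_eval₂' h' (by linarith : x + (a - p) ≤ a)]
      ring
    | some u =>
      have hup := (h.hu u rfl).1
      have hua := (h.hu u rfl).2
      have hneu1 : p - u ≠ 0 := by intro hc; linarith [sub_eq_zero.mp hc]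
      have hneu2 : a - u ≠ 0 := by intro hc; linarith [sub_eq_zero.mp hc]
      rcases le_total x u with hxu | hux
      · rw [pl_eval₁ h hxu, pl_eval₁ h' hxu]
      · rw [pl_eval₂ h hux hxp]
        have e1 : x + (a - p) * ((x - u) / (p - u)) - u = (x - u) * (a - u) / (p - u) := by
          field_simp; ring
        have e2 : a - (x + (a - p) * ((x - u) / (p - u))) = (p - x) * (a - u) / (p - u) := by
          field_simp; ring
        have m1 : u ≤ x + (a - p) * ((x - u) / (p - u)) := by
          have : (0:ℝ) ≤ (x - u) * (a - u) / (p - u) := by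
            apply div_nonneg; nlinarith; linarith
          linarith [e1 ▸ this]
        have m2 : x + (a - p) * ((x - u) / (p - u)) ≤ a := by
          have : (0:ℝ) ≤ (p - x) * (a - u) / (p - u) := by
            apply div_nonneg; nlinarith; linarith
          linarith [e2 ▸ this]
        rw [pl_eval₂ h' m1 m2]
        field_simp
        ring
  · rcases le_total x q with hxq | hqx
    · rw [pl_eval₃ h hpx hxq]
      set y := x + (a - p) + ((b - q) - (a - p)) * ((x - p) / (q - p)) with hy
      have e1 : y - a = (x - p) * (b - a) / (q - p) := by rw [hy]; field_simp; ring
      have e2 : b - y = (q - x) * (b - a) / (q - p) := by rw [hy]; field_simp; ring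
      have m1 : a ≤ y := by
        have : (0:ℝ) ≤ (x - p) * (b - a) / (q - p) := by
          apply div_nonneg; nlinarith; linarith
        linarith [e1 ▸ this]
      have m2 : y ≤ b := by
        have : (0:ℝ) ≤ (q - x) * (b - a) / (q - p) := by
          apply div_nonneg; nlinarith; linarith
        linarith [e2 ▸ this]
      rw [pl_eval₃ h' m1 m2, hy]
      field_simp
      ring
    · cases vo with
      | none =>
        rw [pl_eval₄' h hqx, pl_eval₄' h' (by linarith : b ≤ x + (b - q))]
        ring
      | some v =>
        have hqv := (h.hv v rfl).1
        have hbv := (h.hv v rfl).2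
        have hnev1 : v - q ≠ 0 := by intro hc; linarith [sub_eq_zero.mp hc]
        have hnev2 : v - b ≠ 0 := by intro hc; linarith [sub_eq_zero.mp hc]
        rcases le_total x v with hxv | hvx
        · rw [pl_eval₄ h hqx hxv]
          set y := x + (b - q) - (b - q) * ((x - q) / (v - q)) with hy
          have e1 : y - b = (x - q) * (v - b) / (v - q) := by rw [hy]; field_simp; ring
          have e2 : v - y = (v - x) * (v - b) / (v - q) := by rw [hy]; field_simp; ring
          have m1 : b ≤ y := by
            have : (0:ℝ) ≤ (x - q) * (v - b) / (v - q) := by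
              apply div_nonneg; nlinarith; linarith
            linarith [e1 ▸ this]
          have m2 : y ≤ v := by
            have : (0:ℝ) ≤ (v - x) * (v - b) / (v - q) := by
              apply div_nonneg; nlinarith; linarith
            linarith [e2 ▸ this]
          rw [pl_eval₄ h' m1 m2, hy]
          field_simp
          ring
        · rw [pl_eval₅ h hvx, pl_eval₅ h' hvx]

lemma pl_contOn {γ : Type*} [TopologicalSpace γ] {P Q A B X : γ → ℝ} {s : Set γ}
    (hP : ContinuousOn P s) (hQ : ContinuousOn Q s) (hA : ContinuousOn A s)
    (hB : ContinuousOn B s) (hX : ContinuousOn X s)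
    (hpq : ∀ z ∈ s, P z < Q z)
    (hu : ∀ u ∈ uo, ∀ z ∈ s, u < P z) (hv : ∀ v ∈ vo, ∀ z ∈ s, Q z < v) :
    ContinuousOn (fun z => pl uo vo (P z) (Q z) (A z) (B z) (X z)) s := by
  have hmid : ContinuousOn (fun z => ((B z - Q z) - (A z - P z)) * ramp (P z) (Q z) (X z)) s :=
    ((hB.sub hQ).sub (hA.sub hP)).mul (ramp_contOn hP hQ hX hpq)
  have hlt : ContinuousOn (fun z => lterm uo (P z) (A z) (X z)) s := by
    cases uo with
    | none => exact hA.sub hP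
    | some u =>
      exact (hA.sub hP).mul
        (ramp_contOn continuousOn_const hP hX (fun z hz => hu u rfl z hz))
  have hrt : ContinuousOn (fun z => rterm vo (Q z) (B z) (X z)) s := by
    cases vo with
    | none => exact continuousOn_const
    | some v =>
      exact ((hB.sub hQ).neg).mul
        (ramp_contOn hQ continuousOn_const hX (fun z hz => hv v rfl z hz))
  exact ((hX.add hlt).add hmid).add hrt


/-! ### Sorting the indices by decreasing level -/

lemma exists_sorted_enum (t : ℕ → ℝ) (hfin : ∀ i : ℕ, {j : ℕ | t i ≤ t j}.Finite) :
    ∃ σ : ℕ → ℕ, Function.Bijective σ ∧ ∀ k l : ℕ, k ≤ l → t (σ l) ≤ t (σ k) := by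
  classical
  -- the strict "comes before" relation
  set rel : ℕ → ℕ → Prop := fun i j => t j < t i ∨ (t j = t i ∧ i < j) with hrel
  have htrans : ∀ {i j k}, rel i j → rel j k → rel i k := by
    intro i j k h1 h2
    rcases h1 with h1 | ⟨h1, h1'⟩ <;> rcases h2 with h2 | ⟨h2, h2'⟩ <;>
      [left; left; left; right] <;> first | (constructor <;> linarith) | linarith | omega
  have hirr : ∀ i, ¬ rel i i := by
    intro i h
    rcases h with h | ⟨_, h⟩
    · exact lt_irrefl _ h
    · exact lt_irrefl _ h
  have htot : ∀ i j, i ≠ j → rel i j ∨ rel j i := by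
    intro i j hij
    rcases lt_trichotomy (t i) (t j) with h | h | h
    · exact Or.inr (Or.inl h)
    · rcases lt_or_gt_of_ne hij with h' | h'
      · exact Or.inl (Or.inr ⟨h.symm, h'⟩)
      · exact Or.inr (Or.inr ⟨h, h'⟩)
    · exact Or.inl (Or.inl h)
  have hpredfin : ∀ i, {j | rel j i}.Finite := by
    intro i
    apply (hfin i).subset
    intro j hj
    rcases hj with h | ⟨h, _⟩ <;> simp only [Set.mem_setOf_eq] <;> linarith
  set F : ℕ → Finset ℕ := fun i => (hpredfin i).toFinset with hF
  have hmemF : ∀ i j, j ∈ F i ↔ rel j i := by intro i j; simp [hF]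
  set r : ℕ → ℕ := fun i => (F i).card with hr
  have hmono : ∀ {j i}, rel j i → r j < r i := by
    intro j i h
    have hsub : F j ⊆ F i := by
      intro k hk
      rw [hmemF] at hk ⊢
      exact htrans hk h
    have hji : j ∈ F i := (hmemF i j).2 h
    have hjj : j ∉ F j := fun hc => hirr j ((hmemF j j).1 hc)
    exact Finset.card_lt_card ⟨hsub, fun hc => hjj (hc hji)⟩
  have hrne : ∀ {i j}, i ≠ j → r i ≠ r j := by
    intro i j hij
    rcases htot i j hij with h | h
    · exact (hmono h).ne
    · exact (hmono h).ne'
  have hrinj : Function.Injective r := fun i j h => by_contra fun hc => hrne hc h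
  have hmono' : ∀ {j i}, r j < r i → rel j i := by
    intro j i h
    rcases htot j i (fun hc => by subst hc; omega) with h' | h'
    · exact h'
    · exact absurd (hmono h') (by omega)
  -- descending step
  have hdesc : ∀ k : ℕ, ∀ m ≤ k, (∃ i, r i = k) → ∃ j, r j = m := by
    intro k
    induction k with
    | zero =>
      intro m hm hi
      obtain rfl : m = 0 := by omega
      exact hi
    | succ k ih =>
      rintro m hm ⟨i, hi⟩
      rcases Nat.eq_or_lt_of_le hm with rfl | hm'
      · exact ⟨i, hi⟩
      · have hne : (F i).Nonempty := by
          have h2 : (F i).card = k + 1 := hi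
          rw [← Finset.card_pos]; omega
        obtain ⟨j, hjF, hjmax⟩ := Finset.exists_max_image (F i) r hne
        have hrj : r j = k := by
          have hFj : F j = (F i).erase j := by
            ext k'
            simp only [Finset.mem_erase, hmemF]
            constructor
            · intro hk'
              exact ⟨fun hc => hirr j (hc ▸ hk'), (hmemF i k').1 ((hmemF i k').2
                (htrans hk' ((hmemF i j).1 hjF)))⟩
            · rintro ⟨hne', hk'⟩
              apply hmono'
              have h1 := hjmax k' ((hmemF i k').2 hk')
              have h2 := hrne hne'
              omega
          have h1 : (F j).card = (F i).card - 1 := by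
            rw [hFj, Finset.card_erase_of_mem hjF]
          have h2 : (F i).card = k + 1 := hi
          show (F j).card = k
          omega
        exact ih m (by omega) ⟨j, hrj⟩
  have hrsurj : Function.Surjective r := by
    intro n
    have hfin' : {i | r i < n}.Finite := by
      have := Set.Finite.preimage (Set.injOn_of_injective hrinj)
        (Set.finite_Iio n)
      exact this
    obtain ⟨i, hi⟩ := hfin'.infinite_compl.nonempty
    simp only [Set.mem_compl_iff, Set.mem_setOf_eq, not_lt] at hi
    exact hdesc (r i) n hi ⟨i, rfl⟩
  set σ : ℕ → ℕ := fun n => (hrsurj n).choose with hσ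
  have hrσ : ∀ n, r (σ n) = n := fun n => (hrsurj n).choose_spec
  have hσinj : Function.Injective σ := by
    intro m n h
    rw [← hrσ m, ← hrσ n, h]
  have hσsurj : Function.Surjective σ := by
    intro i
    refine ⟨r i, hrinj ?_⟩
    rw [hrσ]
  refine ⟨σ, ⟨hσinj, hσsurj⟩, ?_⟩
  intro k l hkl
  rcases Nat.eq_or_lt_of_le hkl with rfl | hkl'
  · exact le_rfl
  · by_contra hc
    push_neg at hc
    have : rel (σ l) (σ k) := Or.inl hc
    have := hmono this
    rw [hrσ, hrσ] at this
    omega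


/-! ### The inductive straightening construction -/

lemma Icc_disj_aux {p q a b : ℝ} (hpq : p ≤ q) (hab : a ≤ b)
    (h : Disjoint (Icc p q) (Icc a b)) : q < a ∨ b < p := by
  by_contra hc
  push_neg at hc
  obtain ⟨h1, h2⟩ := hc
  exact Set.disjoint_left.mp h
    (⟨le_max_left _ _, max_le hpq h1⟩ : max p a ∈ Icc p q)
    (⟨le_max_right _ _, max_le h2 hab⟩ : max p a ∈ Icc a b)

section Main

variable {c d : ℝ} {t : ℕ → ℝ} {α β : ℕ → ℝ → ℝ} {σ : ℕ → ℕ}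

/-- All standing hypotheses of the construction. -/
structure Ctx (c d : ℝ) (t : ℕ → ℝ) (α β : ℕ → ℝ → ℝ) (σ : ℕ → ℕ) : Prop where
  hcd : c < d
  ht : ∀ i, t i ∈ Ioc c d
  hα : ∀ i, ContinuousOn (α i) (Ioc c (t i))
  hβ : ∀ i, ContinuousOn (β i) (Ioc c (t i))
  hαβ : ∀ i, ∀ y ∈ Ioc c (t i), α i y < β i y
  hsep : ∀ i j, i ≠ j → ∀ y, y ∈ Ioc c (t i) → y ∈ Ioc c (t j) →
    Disjoint (Icc (α i y) (β i y)) (Icc (α j y) (β j y))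
  hσinj : Function.Injective σ
  hsort : ∀ k l : ℕ, k ≤ l → t (σ l) ≤ t (σ k)

/-- State after straightening the first `n` trapezoids (in the order given by `σ`). -/
structure Stage (c d : ℝ) (t : ℕ → ℝ) (α β : ℕ → ℝ → ℝ) (σ : ℕ → ℕ) (n : ℕ) where
  H : ℝ → ℝ → ℝ
  K : ℝ → ℝ → ℝ
  A : ℕ → ℝ
  B : ℕ → ℝ
  cont : ContinuousOn (fun z : ℝ × ℝ => H z.1 z.2) (Ioc c d ×ˢ (univ : Set ℝ))
  cont' : ContinuousOn (fun z : ℝ × ℝ => K z.1 z.2) (Ioc c d ×ˢ (univ : Set ℝ))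
  mono : ∀ y ∈ Ioc c d, StrictMono (H y)
  linv : ∀ y ∈ Ioc c d, ∀ x, K y (H y x) = x
  rinv : ∀ y ∈ Ioc c d, ∀ x, H y (K y x) = x
  hab : ∀ j < n, A j < B j
  hA : ∀ j < n, ∀ y ∈ Ioc c (t (σ j)), H y (α (σ j) y) = A j
  hB : ∀ j < n, ∀ y ∈ Ioc c (t (σ j)), H y (β (σ j) y) = B j

variable {n : ℕ}

lemma Stage.sliceCont (S : Stage c d t α β σ n) {y : ℝ} (hy : y ∈ Ioc c d) :
    Continuous (S.H y) := by
  apply S.cont.comp_continuous (continuous_const.prodMk continuous_id)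
  intro x
  exact ⟨hy, mem_univ x⟩

lemma Stage.image_Icc (S : Stage c d t α β σ n) {y : ℝ} (hy : y ∈ Ioc c d)
    {x₁ x₂ : ℝ} (h : x₁ ≤ x₂) :
    S.H y '' Icc x₁ x₂ = Icc (S.H y x₁) (S.H y x₂) := by
  apply Subset.antisymm
  · rintro _ ⟨x, hx, rfl⟩
    exact ⟨(S.mono y hy).monotone hx.1, (S.mono y hy).monotone hx.2⟩
  · exact intermediate_value_Icc h (S.sliceCont hy).continuousOn

/-- Left endpoint (in the current coordinates) of the `n`-th trapezoid at level `y`,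
frozen above its top level. -/
def stepP (S : Stage c d t α β σ n) (y : ℝ) : ℝ :=
  S.H (min y (t (σ n))) (α (σ n) (min y (t (σ n))))

def stepQ (S : Stage c d t α β σ n) (y : ℝ) : ℝ :=
  S.H (min y (t (σ n))) (β (σ n) (min y (t (σ n))))

def stepa (S : Stage c d t α β σ n) : ℝ := stepP S (t (σ n))
def stepb (S : Stage c d t α β σ n) : ℝ := stepQ S (t (σ n))

open Classical in
def stepuo (S : Stage c d t α β σ n) : Option ℝ :=
  if h : ((Finset.range n).filter (fun j => S.B j < stepa S)).Nonempty then
    some ((((Finset.range n).filter (fun j => S.B j < stepa S)).image S.B).max'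
      (h.image _))
  else none

open Classical in
def stepvo (S : Stage c d t α β σ n) : Option ℝ :=
  if h : ((Finset.range n).filter (fun j => ¬ S.B j < stepa S)).Nonempty then
    some ((((Finset.range n).filter (fun j => ¬ S.B j < stepa S)).image S.A).min'
      (h.image _))
  else none

lemma stepP_eq (S : Stage c d t α β σ n) {y : ℝ} (hy : y ≤ t (σ n)) :
    stepP S y = S.H y (α (σ n) y) := by simp [stepP, min_eq_left hy]

lemma stepQ_eq (S : Stage c d t α β σ n) {y : ℝ} (hy : y ≤ t (σ n)) :
    stepQ S y = S.H y (β (σ n) y) := by simp [stepQ, min_eq_left hy]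

lemma stepP_eq_top (S : Stage c d t α β σ n) {y : ℝ} (hy : t (σ n) ≤ y) :
    stepP S y = stepa S := by
  simp [stepP, stepa, min_eq_right hy, min_self]

lemma stepQ_eq_top (S : Stage c d t α β σ n) {y : ℝ} (hy : t (σ n) ≤ y) :
    stepQ S y = stepb S := by
  simp [stepQ, stepb, min_eq_right hy, min_self]

lemma stepP_min (S : Stage c d t α β σ n) (y : ℝ) :
    stepP S y = stepP S (min y (t (σ n))) := by
  simp [stepP, min_eq_left (min_le_right y (t (σ n)))]

lemma stepQ_min (S : Stage c d t α β σ n) (y : ℝ) :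
    stepQ S y = stepQ S (min y (t (σ n))) := by
  simp [stepQ, min_eq_left (min_le_right y (t (σ n)))]

lemma min_mem_Ioc (ctx : Ctx c d t α β σ) {y : ℝ} (hy : y ∈ Ioc c d) :
    min y (t (σ n)) ∈ Ioc c (t (σ n)) :=
  ⟨lt_min hy.1 (ctx.ht (σ n)).1, min_le_right _ _⟩

lemma Ioc_sub (ctx : Ctx c d t α β σ) {i : ℕ} : Ioc c (t i) ⊆ Ioc c d :=
  Ioc_subset_Ioc le_rfl (ctx.ht i).2

lemma stepP_cont (ctx : Ctx c d t α β σ) (S : Stage c d t α β σ n) :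
    ContinuousOn (stepP S) (Ioc c d) := by
  have hmin : ContinuousOn (fun y : ℝ => min y (t (σ n))) (Ioc c d) :=
    (continuous_id.min continuous_const).continuousOn
  have hmaps : MapsTo (fun y : ℝ => min y (t (σ n))) (Ioc c d) (Ioc c (t (σ n))) :=
    fun y hy => min_mem_Ioc ctx hy
  have hα' : ContinuousOn (fun y : ℝ => α (σ n) (min y (t (σ n)))) (Ioc c d) :=
    (ctx.hα (σ n)).comp hmin hmaps
  apply S.cont.comp (hmin.prodMk hα')
  intro y hy
  exact ⟨(Ioc_sub ctx) (min_mem_Ioc ctx hy), mem_univ _⟩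

lemma stepQ_cont (ctx : Ctx c d t α β σ) (S : Stage c d t α β σ n) :
    ContinuousOn (stepQ S) (Ioc c d) := by
  have hmin : ContinuousOn (fun y : ℝ => min y (t (σ n))) (Ioc c d) :=
    (continuous_id.min continuous_const).continuousOn
  have hmaps : MapsTo (fun y : ℝ => min y (t (σ n))) (Ioc c d) (Ioc c (t (σ n))) :=
    fun y hy => min_mem_Ioc ctx hy
  have hβ' : ContinuousOn (fun y : ℝ => β (σ n) (min y (t (σ n)))) (Ioc c d) :=
    (ctx.hβ (σ n)).comp hmin hmaps
  apply S.cont.comp (hmin.prodMk hβ')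
  intro y hy
  exact ⟨(Ioc_sub ctx) (min_mem_Ioc ctx hy), mem_univ _⟩

lemma stepP_lt_stepQ (ctx : Ctx c d t α β σ) (S : Stage c d t α β σ n) {y : ℝ}
    (hy : y ∈ Ioc c d) : stepP S y < stepQ S y := by
  have h1 := min_mem_Ioc (n := n) ctx hy
  exact S.mono _ ((Ioc_sub ctx) h1) (ctx.hαβ (σ n) _ h1)

lemma stepab (ctx : Ctx c d t α β σ) (S : Stage c d t α β σ n) : stepa S < stepb S :=
  stepP_lt_stepQ ctx S (ctx.ht (σ n))

lemma step_disj (ctx : Ctx c d t α β σ) (S : Stage c d t α β σ n) {j : ℕ} (hj : j < n)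
    {y : ℝ} (hy : y ∈ Ioc c (t (σ n))) : stepQ S y < S.A j ∨ S.B j < stepP S y := by
  have hyd : y ∈ Ioc c d := (Ioc_sub ctx) hy
  have hyj : y ∈ Ioc c (t (σ j)) := ⟨hy.1, hy.2.trans (ctx.hsort j n hj.le)⟩
  have hne : σ n ≠ σ j := fun hc => (Nat.lt_irrefl j) (by
    have := ctx.hσinj hc; omega)
  have hd : Disjoint (Icc (α (σ n) y) (β (σ n) y)) (Icc (α (σ j) y) (β (σ j) y)) :=
    ctx.hsep (σ n) (σ j) hne y hy hyj
  have himg : Disjoint (S.H y '' Icc (α (σ n) y) (β (σ n) y))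
      (S.H y '' Icc (α (σ j) y) (β (σ j) y)) :=
    Set.disjoint_image_of_injective (S.mono y hyd).injective hd
  rw [S.image_Icc hyd (ctx.hαβ (σ n) y hy).le,
    S.image_Icc hyd (ctx.hαβ (σ j) y hyj).le] at himg
  rw [S.hA j hj y hyj, S.hB j hj y hyj] at himg
  rw [← stepP_eq S hy.2, ← stepQ_eq S hy.2] at himg
  exact Icc_disj_aux (stepP_lt_stepQ ctx S hyd).le (S.hab j hj).le himg

lemma step_side (ctx : Ctx c d t α β σ) (S : Stage c d t α β σ n) {j : ℕ} (hj : j < n) :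
    (∀ y ∈ Ioc c (t (σ n)), stepQ S y < S.A j) ∨
    (∀ y ∈ Ioc c (t (σ n)), S.B j < stepP S y) := by
  by_contra hc
  push_neg at hc
  obtain ⟨⟨y₁, hy₁, hy₁'⟩, ⟨y₂, hy₂, hy₂'⟩⟩ := hc
  -- at y₁ the trapezoid is to the right of rectangle j, at y₂ to the left
  have h₁ : S.B j < stepP S y₁ := (step_disj ctx S hj hy₁).resolve_left (not_lt.mpr hy₁')
  have h₂ : stepQ S y₂ < S.A j := (step_disj ctx S hj hy₂).resolve_right (not_lt.mpr hy₂')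
  have h₂' : stepP S y₂ ≤ S.B j := by
    have := stepP_lt_stepQ ctx S ((Ioc_sub ctx) hy₂)
    have := S.hab j hj
    linarith
  -- intermediate value: at some level the left endpoint hits `S.B j`
  have hsub : uIcc y₂ y₁ ⊆ Ioc c (t (σ n)) := by
    intro z hz
    rw [mem_uIcc] at hz
    rcases hz with ⟨h1, h2⟩ | ⟨h1, h2⟩
    · exact ⟨lt_of_lt_of_le hy₂.1 h1, h2.trans hy₁.2⟩
    · exact ⟨lt_of_lt_of_le hy₁.1 h1, h2.trans hy₂.2⟩
  have hcont : ContinuousOn (stepP S) (uIcc y₂ y₁) :=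
    (stepP_cont ctx S).mono (hsub.trans (Ioc_sub ctx))
  have hmem : S.B j ∈ uIcc (stepP S y₂) (stepP S y₁) := by
    rw [mem_uIcc]
    left
    exact ⟨h₂', h₁.le⟩
  obtain ⟨y₀, hy₀, hy₀'⟩ := intermediate_value_uIcc hcont hmem
  have hy₀m := hsub hy₀
  rcases step_disj ctx S hj hy₀m with h | h
  · have h1 : stepP S y₀ ≤ stepQ S y₀ := (stepP_lt_stepQ ctx S ((Ioc_sub ctx) hy₀m)).le
    have h2 := S.hab j hj
    rw [hy₀'] at h1
    linarith
  · rw [hy₀'] at h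
    exact lt_irrefl _ h

lemma step_side_left (ctx : Ctx c d t α β σ) (S : Stage c d t α β σ n) {j : ℕ}
    (hj : j < n) (h : S.B j < stepa S) : ∀ y ∈ Ioc c d, S.B j < stepP S y := by
  intro y hy
  rcases step_side ctx S hj with hs | hs
  · exfalso
    have := hs (t (σ n)) ⟨(ctx.ht (σ n)).1, le_rfl⟩
    rw [stepQ_eq_top S le_rfl] at this
    have := stepab ctx S
    have := S.hab j hj
    linarith
  · rw [stepP_min S y]
    exact hs _ (min_mem_Ioc ctx hy)

lemma step_side_right (ctx : Ctx c d t α β σ) (S : Stage c d t α β σ n) {j : ℕ}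
    (hj : j < n) (h : ¬ S.B j < stepa S) : ∀ y ∈ Ioc c d, stepQ S y < S.A j := by
  intro y hy
  rcases step_side ctx S hj with hs | hs
  · rw [stepQ_min S y]
    exact hs _ (min_mem_Ioc ctx hy)
  · exfalso
    have := hs (t (σ n)) ⟨(ctx.ht (σ n)).1, le_rfl⟩
    rw [stepP_eq_top S le_rfl] at this
    exact h this

lemma stepuo_mem {u : ℝ} (S : Stage c d t α β σ n) (hu : u ∈ stepuo S) :
    ∃ j < n, S.B j < stepa S ∧ u = S.B j := by
  classical
  unfold stepuo at hu
  split_ifs at hu with h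
  · simp only [Option.mem_def, Option.some_inj] at hu
    obtain ⟨j, hj, hju⟩ := Finset.mem_image.mp (Finset.max'_mem ((((Finset.range n).filter (fun j => S.B j < stepa S))).image S.B) (h.image _))
    rw [Finset.mem_filter, Finset.mem_range] at hj
    exact ⟨j, hj.1, hj.2, by rw [← hu, ← hju]⟩
  · simp at hu

lemma stepuo_ge {u : ℝ} (S : Stage c d t α β σ n) (hu : u ∈ stepuo S) {j : ℕ}
    (hj : j < n) (hjl : S.B j < stepa S) : S.B j ≤ u := by
  classical
  unfold stepuo at hu
  split_ifs at hu with h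
  · simp only [Option.mem_def, Option.some_inj] at hu
    rw [← hu]
    apply Finset.le_max'
    exact Finset.mem_image_of_mem _ (Finset.mem_filter.mpr ⟨Finset.mem_range.mpr hj, hjl⟩)
  · simp at hu

lemma stepuo_none (S : Stage c d t α β σ n) (hu : stepuo S = none) {j : ℕ}
    (hj : j < n) : ¬ S.B j < stepa S := by
  classical
  unfold stepuo at hu
  split_ifs at hu with h
  intro hc
  exact h ⟨j, Finset.mem_filter.mpr ⟨Finset.mem_range.mpr hj, hc⟩⟩

lemma stepvo_mem {v : ℝ} (S : Stage c d t α β σ n) (hv : v ∈ stepvo S) :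
    ∃ j < n, ¬ S.B j < stepa S ∧ v = S.A j := by
  classical
  unfold stepvo at hv
  split_ifs at hv with h
  · simp only [Option.mem_def, Option.some_inj] at hv
    obtain ⟨j, hj, hjv⟩ := Finset.mem_image.mp (Finset.min'_mem ((((Finset.range n).filter (fun j => ¬ S.B j < stepa S))).image S.A) (h.image _))
    rw [Finset.mem_filter, Finset.mem_range] at hj
    exact ⟨j, hj.1, hj.2, by rw [← hv, ← hjv]⟩
  · simp at hv

lemma stepvo_le {v : ℝ} (S : Stage c d t α β σ n) (hv : v ∈ stepvo S) {j : ℕ}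
    (hj : j < n) (hjr : ¬ S.B j < stepa S) : v ≤ S.A j := by
  classical
  unfold stepvo at hv
  split_ifs at hv with h
  · simp only [Option.mem_def, Option.some_inj] at hv
    rw [← hv]
    apply Finset.min'_le
    exact Finset.mem_image_of_mem _ (Finset.mem_filter.mpr ⟨Finset.mem_range.mpr hj, hjr⟩)
  · simp at hv

lemma stepvo_none (S : Stage c d t α β σ n) (hv : stepvo S = none) {j : ℕ}
    (hj : j < n) : S.B j < stepa S := by
  classical
  unfold stepvo at hv
  split_ifs at hv with h
  by_contra hc
  exact h ⟨j, Finset.mem_filter.mpr ⟨Finset.mem_range.mpr hj, hc⟩⟩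

lemma step_plh (ctx : Ctx c d t α β σ) (S : Stage c d t α β σ n) {y : ℝ}
    (hy : y ∈ Ioc c d) :
    PLH (stepuo S) (stepvo S) (stepP S y) (stepQ S y) (stepa S) (stepb S) := by
  constructor
  · exact stepP_lt_stepQ ctx S hy
  · exact stepab ctx S
  · intro u hu
    obtain ⟨j, hj, hjl, rfl⟩ := stepuo_mem S hu
    exact ⟨step_side_left ctx S hj hjl y hy, step_side_left ctx S hj hjl _ (ctx.ht (σ n))⟩
  · intro v hv
    obtain ⟨j, hj, hjr, rfl⟩ := stepvo_mem S hv
    exact ⟨step_side_right ctx S hj hjr y hy, step_side_right ctx S hj hjr _ (ctx.ht (σ n))⟩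

/-- One step of the construction: straighten the `n`-th trapezoid. -/
def step (ctx : Ctx c d t α β σ) (S : Stage c d t α β σ n) : Stage c d t α β σ (n + 1) where
  H := fun y x => pl (stepuo S) (stepvo S) (stepP S y) (stepQ S y) (stepa S) (stepb S) (S.H y x)
  K := fun y x => S.K y (pl (stepuo S) (stepvo S) (stepa S) (stepb S) (stepP S y) (stepQ S y) x)
  A := Function.update S.A n (stepa S)
  B := Function.update S.B n (stepb S)
  cont := by
    apply pl_contOn
    · exact (stepP_cont ctx S).comp continuousOn_fst (fun z hz => hz.1)
    · exact (stepQ_cont ctx S).comp continuousOn_fst (fun z hz => hz.1)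
    · exact continuousOn_const
    · exact continuousOn_const
    · exact S.cont
    · exact fun z hz => stepP_lt_stepQ ctx S hz.1
    · exact fun u hu z hz => (step_plh ctx S hz.1).hu u hu |>.1
    · exact fun v hv z hz => (step_plh ctx S hz.1).hv v hv |>.1
  cont' := by
    have hin : ContinuousOn (fun z : ℝ × ℝ =>
        pl (stepuo S) (stepvo S) (stepa S) (stepb S) (stepP S z.1) (stepQ S z.1) z.2)
        (Ioc c d ×ˢ (univ : Set ℝ)) := by
      apply pl_contOn continuousOn_const continuousOn_const
        ((stepP_cont ctx S).comp continuousOn_fst (fun z hz => hz.1))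
        ((stepQ_cont ctx S).comp continuousOn_fst (fun z hz => hz.1))
        continuousOn_snd
      · exact fun z hz => stepab ctx S
      · exact fun u hu z hz => ((step_plh ctx S hz.1).symm.hu u hu).1
      · exact fun v hv z hz => ((step_plh ctx S hz.1).symm.hv v hv).1
    exact S.cont'.comp (continuousOn_fst.prodMk hin) (fun z hz => ⟨hz.1, mem_univ _⟩)
  mono := fun y hy => (pl_strictMono (step_plh ctx S hy)).comp (S.mono y hy)
  linv := by
    intro y hy x
    rw [pl_inv (step_plh ctx S hy), S.linv y hy]
  rinv := by
    intro y hy x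
    rw [S.rinv y hy, pl_inv (step_plh ctx S hy).symm]
  hab := by
    intro j hj
    rcases eq_or_lt_of_le (Nat.lt_succ_iff.mp hj) with rfl | hj'
    · rw [Function.update_self, Function.update_self]
      exact stepab ctx S
    · rw [Function.update_of_ne (by omega), Function.update_of_ne (by omega)]
      exact S.hab j hj'
  hA := by
    intro j hj y hy
    rcases eq_or_lt_of_le (Nat.lt_succ_iff.mp hj) with rfl | hj'
    · rw [Function.update_self, ← stepP_eq S hy.2]
      exact pl_p (step_plh ctx S ((Ioc_sub ctx) hy))
    · rw [Function.update_of_ne (by omega)]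
      have hyd : y ∈ Ioc c d := (Ioc_sub ctx) hy
      rw [S.hA j hj' y hy]
      by_cases hside : S.B j < stepa S
      · cases huo : stepuo S with
        | none => exact absurd hside (stepuo_none S huo hj')
        | some u =>
          have h1 : S.B j ≤ u := stepuo_ge S (Option.mem_def.mpr huo) hj' hside
          have h2 : S.A j ≤ u := le_trans (S.hab j hj').le h1
          have plh := step_plh ctx S hyd
          rw [huo] at plh
          exact pl_eval₁ plh h2
      · cases hvo : stepvo S with
        | none => exact absurd (stepvo_none S hvo hj') hside
        | some v =>
          have h1 : v ≤ S.A j := stepvo_le S (Option.mem_def.mpr hvo) hj' hside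
          have plh := step_plh ctx S hyd
          rw [hvo] at plh
          exact pl_eval₅ plh h1
  hB := by
    intro j hj y hy
    rcases eq_or_lt_of_le (Nat.lt_succ_iff.mp hj) with rfl | hj'
    · rw [Function.update_self, ← stepQ_eq S hy.2]
      exact pl_q (step_plh ctx S ((Ioc_sub ctx) hy))
    · rw [Function.update_of_ne (by omega)]
      have hyd : y ∈ Ioc c d := (Ioc_sub ctx) hy
      rw [S.hB j hj' y hy]
      by_cases hside : S.B j < stepa S
      · cases huo : stepuo S with
        | none => exact absurd hside (stepuo_none S huo hj')
        | some u =>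
          have h1 : S.B j ≤ u := stepuo_ge S (Option.mem_def.mpr huo) hj' hside
          have plh := step_plh ctx S hyd
          rw [huo] at plh
          exact pl_eval₁ plh h1
      · cases hvo : stepvo S with
        | none => exact absurd (stepvo_none S hvo hj') hside
        | some v =>
          have h1 : v ≤ S.A j := stepvo_le S (Option.mem_def.mpr hvo) hj' hside
          have h2 : v ≤ S.B j := le_trans h1 (S.hab j hj').le
          have plh := step_plh ctx S hyd
          rw [hvo] at plh
          exact pl_eval₅ plh h2

lemma step_H (ctx : Ctx c d t α β σ) (S : Stage c d t α β σ n) (y x : ℝ) :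
    (step ctx S).H y x =
      pl (stepuo S) (stepvo S) (stepP S y) (stepQ S y) (stepa S) (stepb S) (S.H y x) := rfl

lemma step_id (ctx : Ctx c d t α β σ) (S : Stage c d t α β σ n) {y : ℝ}
    (hy : t (σ n) ≤ y) (x : ℝ) : (step ctx S).H y x = S.H y x := by
  rw [step_H, stepP_eq_top S hy, stepQ_eq_top S hy, pl_id]

lemma step_id' (ctx : Ctx c d t α β σ) (S : Stage c d t α β σ n) {y : ℝ}
    (hy : t (σ n) ≤ y) (x : ℝ) : (step ctx S).K y x = S.K y x := by
  show S.K y (pl (stepuo S) (stepvo S) (stepa S) (stepb S) (stepP S y) (stepQ S y) x) = _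
  rw [stepP_eq_top S hy, stepQ_eq_top S hy, pl_id]

lemma step_A (ctx : Ctx c d t α β σ) (S : Stage c d t α β σ n) {j : ℕ} (hj : j ≠ n) :
    (step ctx S).A j = S.A j := Function.update_of_ne hj _ _

lemma step_B (ctx : Ctx c d t α β σ) (S : Stage c d t α β σ n) {j : ℕ} (hj : j ≠ n) :
    (step ctx S).B j = S.B j := Function.update_of_ne hj _ _

def stage0 : Stage c d t α β σ 0 where
  H := fun _ x => x
  K := fun _ x => x
  A := fun _ => 0
  B := fun _ => 1
  cont := continuous_snd.continuousOn
  cont' := continuous_snd.continuousOn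
  mono := fun _ _ => strictMono_id
  linv := fun _ _ _ => rfl
  rinv := fun _ _ _ => rfl
  hab := fun j hj => absurd hj (by omega)
  hA := fun j hj => absurd hj (by omega)
  hB := fun j hj => absurd hj (by omega)

def stages (ctx : Ctx c d t α β σ) : ∀ n, Stage c d t α β σ n
  | 0 => stage0
  | n + 1 => step ctx (stages ctx n)

lemma stages_stab (ctx : Ctx c d t α β σ) :
    ∀ m n, n ≤ m → ∀ y, (∀ k, n ≤ k → k < m → t (σ k) < y) → ∀ x,
      (stages ctx m).H y x = (stages ctx n).H y x := by
  intro m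
  induction m with
  | zero =>
    intro n hn y _ x
    obtain rfl : n = 0 := by omega
    rfl
  | succ m ih =>
    intro n hn y hcond x
    rcases eq_or_lt_of_le hn with rfl | hn'
    · rfl
    · have hnm : n ≤ m := by omega
      have h1 : t (σ m) ≤ y := (hcond m hnm (by omega)).le
      show (step ctx (stages ctx m)).H y x = _
      rw [step_id ctx (stages ctx m) h1 x]
      exact ih n hnm y (fun k hk hk' => hcond k hk (by omega)) x

lemma stages_stab' (ctx : Ctx c d t α β σ) :
    ∀ m n, n ≤ m → ∀ y, (∀ k, n ≤ k → k < m → t (σ k) < y) → ∀ x,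
      (stages ctx m).K y x = (stages ctx n).K y x := by
  intro m
  induction m with
  | zero =>
    intro n hn y _ x
    obtain rfl : n = 0 := by omega
    rfl
  | succ m ih =>
    intro n hn y hcond x
    rcases eq_or_lt_of_le hn with rfl | hn'
    · rfl
    · have hnm : n ≤ m := by omega
      have h1 : t (σ m) ≤ y := (hcond m hnm (by omega)).le
      show (step ctx (stages ctx m)).K y x = _
      rw [step_id' ctx (stages ctx m) h1 x]
      exact ih n hnm y (fun k hk hk' => hcond k hk (by omega)) x

lemma stages_A_stab (ctx : Ctx c d t α β σ) {j : ℕ} :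
    ∀ m n, j < n → n ≤ m → (stages ctx m).A j = (stages ctx n).A j := by
  intro m
  induction m with
  | zero =>
    intro n hj hn
    obtain rfl : n = 0 := by omega
    rfl
  | succ m ih =>
    intro n hj hn
    rcases eq_or_lt_of_le hn with rfl | hn'
    · rfl
    · have h1 : (stages ctx (m + 1)).A j = (stages ctx m).A j :=
        step_A ctx (stages ctx m) (by omega)
      rw [h1]
      exact ih n hj (by omega)

lemma stages_B_stab (ctx : Ctx c d t α β σ) {j : ℕ} :
    ∀ m n, j < n → n ≤ m → (stages ctx m).B j = (stages ctx n).B j := by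
  intro m
  induction m with
  | zero =>
    intro n hj hn
    obtain rfl : n = 0 := by omega
    rfl
  | succ m ih =>
    intro n hj hn
    rcases eq_or_lt_of_le hn with rfl | hn'
    · rfl
    · have h1 : (stages ctx (m + 1)).B j = (stages ctx m).B j :=
        step_B ctx (stages ctx m) (by omega)
      rw [h1]
      exact ih n hj (by omega)

/-- The limit of the construction. -/
lemma core (ctx : Ctx c d t α β σ)
    (htσ : ∀ y : ℝ, c < y → ∃ n₀ : ℕ, ∀ k ≥ n₀, t (σ k) < y) :
    ∃ (H K : ℝ → ℝ → ℝ) (A B : ℕ → ℝ),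
      ContinuousOn (fun z : ℝ × ℝ => H z.1 z.2) (Ioc c d ×ˢ (univ : Set ℝ)) ∧
      ContinuousOn (fun z : ℝ × ℝ => K z.1 z.2) (Ioc c d ×ˢ (univ : Set ℝ)) ∧
      (∀ y ∈ Ioc c d, StrictMono (H y)) ∧
      (∀ y ∈ Ioc c d, ∀ x, K y (H y x) = x) ∧
      (∀ y ∈ Ioc c d, ∀ x, H y (K y x) = x) ∧
      (∀ j, A j < B j) ∧
      (∀ j, ∀ y ∈ Ioc c (t (σ j)), H y (α (σ j) y) = A j ∧ H y (β (σ j) y) = B j) := by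
  classical
  choose N hN using htσ
  set NN : ℝ → ℕ := fun y => if hy : c < y then N y hy else 0 with hNNdef
  have hNN : ∀ y : ℝ, c < y → ∀ k ≥ NN y, t (σ k) < y := by
    intro y hy k hk
    rw [hNNdef] at hk
    simp only [dif_pos hy] at hk
    exact hN y hy k hk
  have key : ∀ y ∈ Ioc c d, ∀ m, NN y ≤ m → ∀ x,
      (stages ctx m).H y x = (stages ctx (NN y)).H y x := by
    intro y hyd m hm x
    exact stages_stab ctx m (NN y) hm y (fun k hk _ => hNN y hyd.1 k hk) x
  have key' : ∀ y ∈ Ioc c d, ∀ m, NN y ≤ m → ∀ x,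
      (stages ctx m).K y x = (stages ctx (NN y)).K y x := by
    intro y hyd m hm x
    exact stages_stab' ctx m (NN y) hm y (fun k hk _ => hNN y hyd.1 k hk) x
  refine ⟨fun y x => (stages ctx (NN y)).H y x, fun y x => (stages ctx (NN y)).K y x,
    fun j => (stages ctx (j + 1)).A j, fun j => (stages ctx (j + 1)).B j,
    ?_, ?_, ?_, ?_, ?_, ?_, ?_⟩
  · intro z hz
    have hz1 : z.1 ∈ Ioc c d := hz.1
    set y₁ := (c + z.1) / 2 with hy₁def
    have hy₁ : c < y₁ := by
      have := hz1.1
      rw [hy₁def]; linarith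
    have hy₁z : y₁ < z.1 := by
      have := hz1.1
      rw [hy₁def]; linarith
    set n₀ := NN y₁ with hn₀
    have hcong : ∀ w ∈ (Ioc c d ×ˢ (univ : Set ℝ)) ∩ (Ioi y₁ ×ˢ (univ : Set ℝ)),
        (fun z : ℝ × ℝ => (stages ctx (NN z.1)).H z.1 z.2) w =
        (fun z : ℝ × ℝ => (stages ctx n₀).H z.1 z.2) w := by
      rintro ⟨y, x⟩ ⟨⟨hyd, -⟩, hyU, -⟩
      simp only
      have h1 : ∀ k, n₀ ≤ k → t (σ k) < y := fun k hk =>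
        lt_trans (hNN y₁ hy₁ k hk) hyU
      have e1 := stages_stab ctx (max n₀ (NN y)) n₀ (le_max_left _ _) y
        (fun k hk _ => h1 k hk) x
      have e2 := stages_stab ctx (max n₀ (NN y)) (NN y) (le_max_right _ _) y
        (fun k hk _ => hNN y hyd.1 k hk) x
      rw [← e1, e2]
    have hU : (Ioi y₁ ×ˢ (univ : Set ℝ)) ∈ nhds z :=
      IsOpen.mem_nhds (isOpen_Ioi.prod isOpen_univ) ⟨hy₁z, mem_univ _⟩
    rw [← continuousWithinAt_inter hU]
    apply ContinuousWithinAt.congr _ hcong (hcong z ⟨hz, ⟨hy₁z, mem_univ _⟩⟩)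
    exact (((stages ctx n₀).cont) z hz).mono inter_subset_left
  · intro z hz
    have hz1 : z.1 ∈ Ioc c d := hz.1
    set y₁ := (c + z.1) / 2 with hy₁def
    have hy₁ : c < y₁ := by
      have := hz1.1
      rw [hy₁def]; linarith
    have hy₁z : y₁ < z.1 := by
      have := hz1.1
      rw [hy₁def]; linarith
    set n₀ := NN y₁ with hn₀
    have hcong : ∀ w ∈ (Ioc c d ×ˢ (univ : Set ℝ)) ∩ (Ioi y₁ ×ˢ (univ : Set ℝ)),
        (fun z : ℝ × ℝ => (stages ctx (NN z.1)).K z.1 z.2) w =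
        (fun z : ℝ × ℝ => (stages ctx n₀).K z.1 z.2) w := by
      rintro ⟨y, x⟩ ⟨⟨hyd, -⟩, hyU, -⟩
      simp only
      have h1 : ∀ k, n₀ ≤ k → t (σ k) < y := fun k hk =>
        lt_trans (hNN y₁ hy₁ k hk) hyU
      have e1 := stages_stab' ctx (max n₀ (NN y)) n₀ (le_max_left _ _) y
        (fun k hk _ => h1 k hk) x
      have e2 := stages_stab' ctx (max n₀ (NN y)) (NN y) (le_max_right _ _) y
        (fun k hk _ => hNN y hyd.1 k hk) x
      rw [← e1, e2]
    have hU : (Ioi y₁ ×ˢ (univ : Set ℝ)) ∈ nhds z :=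
      IsOpen.mem_nhds (isOpen_Ioi.prod isOpen_univ) ⟨hy₁z, mem_univ _⟩
    rw [← continuousWithinAt_inter hU]
    apply ContinuousWithinAt.congr _ hcong (hcong z ⟨hz, ⟨hy₁z, mem_univ _⟩⟩)
    exact (((stages ctx n₀).cont') z hz).mono inter_subset_left
  · exact fun y hy => (stages ctx (NN y)).mono y hy
  · exact fun y hy x => (stages ctx (NN y)).linv y hy x
  · exact fun y hy x => (stages ctx (NN y)).rinv y hy x
  · exact fun j => (stages ctx (j + 1)).hab j (Nat.lt_succ_self j)
  · intro j y hy
    have hyd : y ∈ Ioc c d := (Ioc_sub ctx) hy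
    set m := max (j + 1) (NN y) with hm
    have hjm : j < m := lt_of_lt_of_le (Nat.lt_succ_self j) (le_max_left _ _)
    have h1 : (stages ctx m).H y (α (σ j) y) = (stages ctx m).A j :=
      (stages ctx m).hA j hjm y hy
    have h1' : (stages ctx m).H y (β (σ j) y) = (stages ctx m).B j :=
      (stages ctx m).hB j hjm y hy
    have h2 := key y hyd m (le_max_right _ _) (α (σ j) y)
    have h2' := key y hyd m (le_max_right _ _) (β (σ j) y)
    have h3 : (stages ctx m).A j = (stages ctx (j + 1)).A j :=
      stages_A_stab ctx m (j + 1) (Nat.lt_succ_self j) (le_max_left _ _)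
    have h3' : (stages ctx m).B j = (stages ctx (j + 1)).B j :=
      stages_B_stab ctx m (j + 1) (Nat.lt_succ_self j) (le_max_left _ _)
    constructor
    · show (stages ctx (NN y)).H y (α (σ j) y) = (stages ctx (j + 1)).A j
      rw [← h2, h1, h3]
    · show (stages ctx (NN y)).H y (β (σ j) y) = (stages ctx (j + 1)).B j
      rw [← h2', h1', h3']

end Main

end Stmt18

open Stmt18 in
/-- given pairwise disjoint half open trapezoids `T i ⊆ ℝ × (c,d]` with upper
bases at levels `t i → c`, there is a homeomorphism of the strip `ℝ × (c,d]` preserving each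
horizontal line and mapping each `T i` onto a half open rectangle `[a,b] × (c, t i]`. -/
theorem stmt18 (c d : ℝ) (hcd : c < d) (t : ℕ → ℝ) (ht : ∀ i, t i ∈ Set.Ioc c d)
    (htc : Filter.Tendsto t Filter.atTop (nhds c))
    (α β : ℕ → ℝ → ℝ)
    (hα : ∀ i, ContinuousOn (α i) (Set.Ioc c (t i)))
    (hβ : ∀ i, ContinuousOn (β i) (Set.Ioc c (t i)))
    (hαβ : ∀ i, ∀ y ∈ Set.Ioc c (t i), α i y < β i y)
    (T : ℕ → Set (ℝ × ℝ))
    (hT : ∀ i, T i =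
      {p : ℝ × ℝ | p.2 ∈ Set.Ioc c (t i) ∧ p.1 ∈ Set.Icc (α i p.2) (β i p.2)})
    (hdisj : Pairwise (Function.onFun Disjoint T)) :
    ∃ η : ↥(Set.univ ×ˢ Set.Ioc c d : Set (ℝ × ℝ)) ≃ₜ
          ↥(Set.univ ×ˢ Set.Ioc c d : Set (ℝ × ℝ)),
      (∀ p : ↥(Set.univ ×ˢ Set.Ioc c d : Set (ℝ × ℝ)),
        ((η p : ℝ × ℝ)).2 = (p : ℝ × ℝ).2) ∧
      (∀ i, ∃ a b : ℝ, a < b ∧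
        Subtype.val '' (⇑η ''
          {p : ↥(Set.univ ×ˢ Set.Ioc c d : Set (ℝ × ℝ)) | (p : ℝ × ℝ) ∈ T i}) =
        Set.Icc a b ×ˢ Set.Ioc c (t i)) := by
  classical
  -- finiteness of super-level sets of `t`
  have hfin : ∀ x : ℝ, c < x → {j : ℕ | x ≤ t j}.Finite := by
    intro x hx
    have h1 : ∀ᶠ j in Filter.cofinite, t j < x := by
      rw [Nat.cofinite_eq_atTop]
      exact htc.eventually (Filter.Tendsto.eventually_lt_const hx (Filter.tendsto_id (α := ℝ)) |>.mono (fun _ h => h))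
    have h2 : {j : ℕ | ¬ t j < x}.Finite := Filter.eventually_cofinite.mp h1
    exact h2.subset (fun j hj => not_lt.mpr hj)
  -- sorted enumeration
  obtain ⟨σ, hσbij, hσsort⟩ := exists_sorted_enum t (fun i => hfin (t i) (ht i).1)
  -- the context
  have ctx : Ctx c d t α β σ :=
    { hcd := hcd
      ht := ht
      hα := hα
      hβ := hβ
      hαβ := hαβ
      hsep := by
        intro i j hij y hyi hyj
        rw [Set.disjoint_left]
        intro x hxi hxj
        have h1 : (x, y) ∈ T i := by rw [hT]; exact ⟨hyi, hxi⟩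
        have h2 : (x, y) ∈ T j := by rw [hT]; exact ⟨hyj, hxj⟩
        exact Set.disjoint_left.mp (hdisj hij) h1 h2
      hσinj := hσbij.1
      hsort := hσsort }
  -- eventual smallness along σ
  have htσ : ∀ y : ℝ, c < y → ∃ n₀ : ℕ, ∀ k ≥ n₀, t (σ k) < y := by
    intro y hy
    have h1 : (σ ⁻¹' {j : ℕ | y ≤ t j}).Finite :=
      (hfin y hy).preimage (Set.injOn_of_injective hσbij.1)
    obtain ⟨b, hb⟩ := h1.bddAbove
    refine ⟨b + 1, fun k hk => ?_⟩
    by_contra hc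
    push_neg at hc
    have : k ∈ σ ⁻¹' {j : ℕ | y ≤ t j} := hc
    have := hb this
    omega
  obtain ⟨H, K, A, B, contH, contK, mono, linv, rinv, hab, hstraight⟩ := core ctx htσ
  -- the strip
  have hmem : ∀ (w y : ℝ), y ∈ Set.Ioc c d →
      ((w, y) : ℝ × ℝ) ∈ (Set.univ ×ˢ Set.Ioc c d : Set (ℝ × ℝ)) :=
    fun w y hy => Set.mem_prod.mpr ⟨Set.mem_univ _, hy⟩
  have hsnd : ∀ p : ↥(Set.univ ×ˢ Set.Ioc c d : Set (ℝ × ℝ)),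
      (p : ℝ × ℝ).2 ∈ Set.Ioc c d := fun p => (Set.mem_prod.mp p.2).2
  -- slice continuity
  have hslice : ∀ y ∈ Set.Ioc c d, Continuous (H y) := by
    intro y hy
    apply contH.comp_continuous (continuous_const.prodMk continuous_id)
    intro x
    exact ⟨hy, Set.mem_univ _⟩
  -- the homeomorphism
  let e : ↥(Set.univ ×ˢ Set.Ioc c d : Set (ℝ × ℝ)) ≃
      ↥(Set.univ ×ˢ Set.Ioc c d : Set (ℝ × ℝ)) :=
  { toFun := fun p => ⟨(H (p : ℝ × ℝ).2 (p : ℝ × ℝ).1, (p : ℝ × ℝ).2), hmem _ _ (hsnd p)⟩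
    invFun := fun p => ⟨(K (p : ℝ × ℝ).2 (p : ℝ × ℝ).1, (p : ℝ × ℝ).2), hmem _ _ (hsnd p)⟩
    left_inv := fun p => by
      apply Subtype.ext
      exact Prod.ext (linv _ (hsnd p) _) rfl
    right_inv := fun p => by
      apply Subtype.ext
      exact Prod.ext (rinv _ (hsnd p) _) rfl }
  have contF : Continuous (fun p : ↥(Set.univ ×ˢ Set.Ioc c d : Set (ℝ × ℝ)) =>
      H (p : ℝ × ℝ).2 (p : ℝ × ℝ).1) := by
    apply contH.comp_continuous
      ((continuous_subtype_val.snd).prodMk (continuous_subtype_val.fst))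
    intro p
    exact ⟨hsnd p, Set.mem_univ _⟩
  have contG : Continuous (fun p : ↥(Set.univ ×ˢ Set.Ioc c d : Set (ℝ × ℝ)) =>
      K (p : ℝ × ℝ).2 (p : ℝ × ℝ).1) := by
    apply contK.comp_continuous
      ((continuous_subtype_val.snd).prodMk (continuous_subtype_val.fst))
    intro p
    exact ⟨hsnd p, Set.mem_univ _⟩
  refine ⟨{ toEquiv := e
            continuous_toFun := by
              apply Continuous.subtype_mk
              exact contF.prodMk continuous_subtype_val.snd
            continuous_invFun := by
              apply Continuous.subtype_mk
              exact contG.prodMk continuous_subtype_val.snd }, ?_, ?_⟩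
  · intro p
    rfl
  · intro i
    obtain ⟨j, rfl⟩ := hσbij.2 i
    refine ⟨A j, B j, hab j, ?_⟩
    ext z
    constructor
    · rintro ⟨w, ⟨p, hp, rfl⟩, rfl⟩
      rw [hT] at hp
      obtain ⟨hp1, hp2⟩ := hp
      have hyd : (p : ℝ × ℝ).2 ∈ Set.Ioc c d := hsnd p
      have hstr := hstraight j (p : ℝ × ℝ).2 hp1
      show (H (p : ℝ × ℝ).2 (p : ℝ × ℝ).1, (p : ℝ × ℝ).2) ∈
        Set.Icc (A j) (B j) ×ˢ Set.Ioc c (t (σ j))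
      refine Set.mem_prod.mpr ⟨?_, hp1⟩
      constructor
      · rw [← hstr.1]
        exact (mono _ hyd).monotone hp2.1
      · rw [← hstr.2]
        exact (mono _ hyd).monotone hp2.2
    · intro hz
      obtain ⟨hz1, hz2⟩ := Set.mem_prod.mp hz
      have hyd : z.2 ∈ Set.Ioc c d := ⟨hz2.1, hz2.2.trans (ht (σ j)).2⟩
      have hstr := hstraight j z.2 hz2
      have hww : z.1 ∈ Set.Icc (H z.2 (α (σ j) z.2)) (H z.2 (β (σ j) z.2)) := by
        rw [hstr.1, hstr.2]
        exact hz1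
      obtain ⟨x, hx, hHx⟩ := intermediate_value_Icc (hαβ (σ j) z.2 hz2).le
        (hslice z.2 hyd).continuousOn hww
      refine ⟨⟨(H z.2 x, z.2), hmem _ _ hyd⟩, ⟨⟨(x, z.2), hmem _ _ hyd⟩, ?_, ?_⟩, ?_⟩
      · rw [Set.mem_setOf_eq, hT]
        exact ⟨hz2, hx⟩
      · rfl
      · show ((H z.2 x, z.2) : ℝ × ℝ) = z
        exact Prod.ext hHx rfl
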